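/- arXiv:1705.09224 — 2 statements merged into one kernel-verified Lean document; each statement's English description precedes it below -/
import Mathlib

section
/- Let A be a noetherian commutative ring and M a meager A-module. Then the associated prime ideals of M are pairwise disjoint: for any two distinct associated primes P and Q of M, one has P + Q = A. -/
/-- `X` is (isomorphic to) a subquotient of the `A`-module `M`. -/
def IsSubquotientOf (A : Type u) [CommRing A]
    (X : Type x) [AddCommGroup X] [Module A X]
    (M : Type v) [AddCommGroup M] [Module A M] : Prop :=
  ∃ (N : Submodule A M) (P : Submodule A (M ⧸ N)), Nonempty (X ≃ₗ[A] P)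

/-- An `A`-module `M` is meager if for every maximal ideal `𝔪` of `A`, `(A/𝔪)²` is not
isomorphic to a subquotient of `M`. -/
def IsMeagerModule (A : Type u) [CommRing A]
    (M : Type v) [AddCommGroup M] [Module A M] : Prop :=
  ∀ 𝔪 : Ideal A, 𝔪.IsMaximal → ¬ IsSubquotientOf A ((A ⧸ 𝔪) × (A ⧸ 𝔪)) M

/-- The associated primes of a meager module over a noetherian commutative ring are pairwise
disjoint: distinct associated primes `P`, `Q` satisfy `P + Q = A`. -/
theorem associated_primes_pairwise_disjoint_of_meager
    (A : Type u) [CommRing A] [IsNoetherianRing A]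
    (M : Type v) [AddCommGroup M] [Module A M]
    (hM : IsMeagerModule A M) :
    ∀ P ∈ associatedPrimes A M, ∀ Q ∈ associatedPrimes A M, P ≠ Q → P ⊔ Q = ⊤ := by
  intro P hP Q hQ hne
  by_contra htop
  obtain ⟨𝔪, h𝔪max, h𝔪⟩ := Ideal.exists_le_maximal _ htop
  have hP𝔪 : P ≤ 𝔪 := le_trans le_sup_left h𝔪
  have hQ𝔪 : Q ≤ 𝔪 := le_trans le_sup_right h𝔪
  obtain ⟨hPp, x, hx⟩ := isAssociatedPrime_iff.mp hP
  rw [Submodule.bot_colon'] at hx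
  obtain ⟨hQp, y, hy⟩ := isAssociatedPrime_iff.mp hQ
  rw [Submodule.bot_colon'] at hy
  -- key: if a • x = b • y then a ∈ P and b ∈ Q
  have key : ∀ a b : A, a • x = b • y → a ∈ P ∧ b ∈ Q := by
    intro a b hab
    by_contra hcon
    have ha : a ∉ P := by
      intro ha
      apply hcon
      have hax : a • x = 0 := by
        rw [hx, Submodule.mem_annihilator_span_singleton] at ha; exact ha
      refine ⟨ha, ?_⟩
      rw [hy, Submodule.mem_annihilator_span_singleton, ← hab, hax]
    have hb : b ∉ Q := by
      intro hb
      apply ha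
      have hby : b • y = 0 := by
        rw [hy, Submodule.mem_annihilator_span_singleton] at hb; exact hb
      rw [hx, Submodule.mem_annihilator_span_singleton, hab, hby]
    apply hne
    ext c
    rw [hx, hy, Submodule.mem_annihilator_span_singleton,
      Submodule.mem_annihilator_span_singleton]
    constructor
    · intro hcx
      have : (c * b) • y = 0 := by
        rw [mul_smul, ← hab, smul_comm, hcx, smul_zero]
      have hcb : c * b ∈ Q := by
        rw [hy, Submodule.mem_annihilator_span_singleton]; exact this
      rcases hQp.mem_or_mem hcb with h | h
      · rw [hy, Submodule.mem_annihilator_span_singleton] at h; exact h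
      · exact absurd h hb
    · intro hcy
      have : (c * a) • x = 0 := by
        rw [mul_smul, hab, smul_comm, hcy, smul_zero]
      have hca : c * a ∈ P := by
        rw [hx, Submodule.mem_annihilator_span_singleton]; exact this
      rcases hPp.mem_or_mem hca with h | h
      · rw [hx, Submodule.mem_annihilator_span_singleton] at h; exact h
      · exact absurd h ha
  apply hM 𝔪 h𝔪max
  -- the submodule N = 𝔪•x + 𝔪•y
  set N : Submodule A M :=
    𝔪 • Submodule.span A {x} ⊔ 𝔪 • Submodule.span A {y} with hN
  -- ψ : A × A → M ⧸ N, (a, b) ↦ [a•x + b•y]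
  set φ : (A × A) →ₗ[A] M :=
    (LinearMap.toSpanSingleton A M x).coprod (LinearMap.toSpanSingleton A M y) with hφ
  set ψ : (A × A) →ₗ[A] (M ⧸ N) := N.mkQ.comp φ with hψ
  -- f : A × A → (A⧸𝔪) × (A⧸𝔪)
  set f : (A × A) →ₗ[A] ((A ⧸ 𝔪) × (A ⧸ 𝔪)) := (𝔪.mkQ).prodMap (𝔪.mkQ) with hf
  have hfsurj : Function.Surjective f :=
    Function.Surjective.prodMap 𝔪.mkQ_surjective 𝔪.mkQ_surjective
  have hker : LinearMap.ker ψ = LinearMap.ker f := by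
    ext ⟨a, b⟩
    simp only [LinearMap.mem_ker, hψ, hf, LinearMap.comp_apply, LinearMap.prodMap_apply,
      hφ, LinearMap.coprod_apply, LinearMap.toSpanSingleton_apply, Prod.mk_eq_zero,
      Submodule.mkQ_apply, Submodule.Quotient.mk_eq_zero]
    constructor
    · intro h
      rw [Submodule.mem_sup] at h
      obtain ⟨u, hu, v, hv, huv⟩ := h
      rw [Submodule.mem_smul_span_singleton] at hu hv
      obtain ⟨c, hc, rfl⟩ := hu
      obtain ⟨d, hd, rfl⟩ := hv
      have hab : (a - c) • x = (d - b) • y := by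
        rw [sub_smul, sub_smul, sub_eq_sub_iff_add_eq_add, ← huv]
        abel
      obtain ⟨h1, h2⟩ := key _ _ hab
      constructor
      · have : a - c ∈ 𝔪 := hP𝔪 h1
        simpa using 𝔪.add_mem this hc
      · have : d - b ∈ 𝔪 := hQ𝔪 h2
        have := 𝔪.sub_mem hd this
        simpa using this
    · rintro ⟨ha, hb⟩
      rw [Submodule.mem_sup]
      exact ⟨a • x, Submodule.mem_smul_span_singleton.2 ⟨a, ha, rfl⟩,
        b • y, Submodule.mem_smul_span_singleton.2 ⟨b, hb, rfl⟩, rfl⟩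
  refine ⟨N, LinearMap.range ψ, ⟨?_⟩⟩
  exact ((f.quotKerEquivOfSurjective hfsurj).symm.trans
    (Submodule.quotEquivOfEq _ _ hker.symm)).trans ψ.quotKerEquivRange
end

section
/- Let A be a noetherian integral domain. The following are equivalent: (1) A is a meager A-module; (2) the fraction field Frac(A) is a meager A-module; (3) A is a Dedekind domain. -/
open Submodule Function Pointwise
open scoped nonZeroDivisors


section Aux

variable {A : Type u} [CommRing A]

lemma quot_smul_eq (𝔪 : Ideal A) (c : A) (w : A ⧸ 𝔪) :
    c • w = Ideal.Quotient.mk 𝔪 c * w := by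
  obtain ⟨z, rfl⟩ := Ideal.Quotient.mk_surjective w
  rfl

/-- `(A⧸𝔪)²` is not cyclic as an `A`-module. -/
lemma prod_quot_not_cyclic (𝔪 : Ideal A) (h𝔪 : 𝔪.IsMaximal)
    (v : (A ⧸ 𝔪) × (A ⧸ 𝔪)) : Submodule.span A {v} ≠ ⊤ := by
  intro htop
  have h1 : ((1 : A ⧸ 𝔪), (0 : A ⧸ 𝔪)) ∈ Submodule.span A {v} := htop ▸ trivial
  have h2 : ((0 : A ⧸ 𝔪), (1 : A ⧸ 𝔪)) ∈ Submodule.span A {v} := htop ▸ trivial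
  rw [Submodule.mem_span_singleton] at h1 h2
  obtain ⟨a, ha⟩ := h1
  obtain ⟨b, hb⟩ := h2
  letI := Ideal.Quotient.field 𝔪
  haveI := Ideal.Quotient.nontrivial_iff.mpr h𝔪.ne_top
  obtain ⟨v1, v2⟩ := v
  have ha1 : Ideal.Quotient.mk 𝔪 a * v1 = 1 := by
    rw [← quot_smul_eq]; exact congrArg Prod.fst ha
  have hb1 : Ideal.Quotient.mk 𝔪 b * v1 = 0 := by
    rw [← quot_smul_eq]; exact congrArg Prod.fst hb
  have hb2 : Ideal.Quotient.mk 𝔪 b * v2 = 1 := by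
    rw [← quot_smul_eq]; exact congrArg Prod.snd hb
  have hv1 : v1 ≠ 0 := by
    intro h; rw [h, mul_zero] at ha1; exact one_ne_zero ha1.symm
  have hbz : Ideal.Quotient.mk 𝔪 b = 0 := by
    rcases mul_eq_zero.mp hb1 with h | h
    · exact h
    · exact absurd h hv1
  rw [hbz, zero_mul] at hb2
  exact one_ne_zero hb2.symm

variable {X : Type x} [AddCommGroup X] [Module A X]
variable {M : Type v} [AddCommGroup M] [Module A M]
variable {M' : Type w} [AddCommGroup M'] [Module A M']

lemma IsSubquotientOf.of_injective (f : M →ₗ[A] M') (hf : Injective f)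
    (h : IsSubquotientOf A X M) : IsSubquotientOf A X M' := by
  obtain ⟨N, P, ⟨e⟩⟩ := h
  set N' : Submodule A M' := N.map f with hN'
  have hker : N = LinearMap.ker (N'.mkQ.comp f) := by
    rw [LinearMap.ker_comp, Submodule.ker_mkQ, hN', Submodule.comap_map_eq_of_injective hf]
  set g : (M ⧸ N) →ₗ[A] (M' ⧸ N') := N.liftQ (N'.mkQ.comp f) (le_of_eq hker)
  have hg : Injective g := by
    rw [← LinearMap.ker_eq_bot]
    exact Submodule.ker_liftQ_eq_bot _ _ _ (le_of_eq hker.symm)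
  set φ : P →ₗ[A] (M' ⧸ N') := g.comp P.subtype
  have hφ : Injective φ := hg.comp (Subtype.val_injective)
  exact ⟨N', LinearMap.range φ, ⟨e.trans (LinearEquiv.ofInjective φ hφ)⟩⟩

/-- From a subquotient, get a surjection from a submodule. -/
lemma IsSubquotientOf.exists_surjective (h : IsSubquotientOf A X M) :
    ∃ (Q : Submodule A M) (f : Q →ₗ[A] X), Surjective f := by
  obtain ⟨N, P, ⟨e⟩⟩ := h
  set Q : Submodule A M := P.comap N.mkQ
  have hsub : ∀ q : Q, N.mkQ q.1 ∈ P := fun q => q.2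
  set g : Q →ₗ[A] P := (N.mkQ.comp Q.subtype).codRestrict P hsub
  have hg : Surjective g := by
    rintro ⟨p, hp⟩
    obtain ⟨m, hm⟩ := N.mkQ_surjective p
    exact ⟨⟨m, by simpa [Q, hm] using hp⟩, Subtype.ext hm⟩
  exact ⟨Q, e.symm.toLinearMap.comp g, e.symm.surjective.comp hg⟩

/-- Conversely, a surjection from an ideal onto `X` makes `X` a subquotient of `A`. -/
lemma isSubquotientOf_of_ideal_surjection (I : Ideal A) (f : I →ₗ[A] X)
    (hf : Surjective f) : IsSubquotientOf A X A := by
  set N : Submodule A A := (LinearMap.ker f).map I.subtype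
  set h : I →ₗ[A] A ⧸ N := N.mkQ.comp I.subtype
  have hker : LinearMap.ker h = LinearMap.ker f := by
    rw [LinearMap.ker_comp, Submodule.ker_mkQ,
      Submodule.comap_map_eq_of_injective (Subtype.val_injective)]
  refine ⟨N, LinearMap.range h, ⟨?_⟩⟩
  exact ((f.quotKerEquivOfSurjective hf).symm.trans
    (Submodule.quotEquivOfEq _ _ hker.symm)).trans h.quotKerEquivRange

end Aux

section LocCyc

/-- In a Dedekind domain, every nonzero ideal is locally principal. -/
lemma dedekind_locCyc {A : Type u} [CommRing A] [IsDomain A] [IsDedekindDomain A]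
    (I : Ideal A) (hI : I ≠ ⊥) (𝔪 : Ideal A) (h𝔪 : 𝔪.IsMaximal) :
    ∃ a ∈ I, ∃ u ∉ 𝔪, ∀ x ∈ I, u * x ∈ Ideal.span {a} := by
  set K := FractionRing A
  have hinj : Injective (algebraMap A K) := IsFractionRing.injective A K
  set I' : FractionalIdeal A⁰ K := (I : FractionalIdeal A⁰ K) with hI'def
  have hI' : I' ≠ 0 := FractionalIdeal.coeIdeal_ne_zero.mpr hI
  have hmul : I' * I'⁻¹ = 1 := mul_inv_cancel₀ hI'
  have h1 : (1 : K) ∈ I' * I'⁻¹ := by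
    rw [hmul]; exact (FractionalIdeal.mem_one_iff A⁰).mpr ⟨1, map_one _⟩
  obtain ⟨T, T', hT, hT', hspan⟩ := FractionalIdeal.mem_span_mul_finite_of_mem_mul h1
  set Msub : Submodule A K := Submodule.map (Algebra.linearMap A K) (𝔪 : Submodule A A)
  have hex : ∃ t ∈ T, ∃ t' ∈ T', t * t' ∉ Msub := by
    by_contra hcon
    push_neg at hcon
    have hle : Submodule.span A ((T : Set K) * (T' : Set K)) ≤ Msub := by
      rw [Submodule.span_le]
      rintro z hz
      obtain ⟨t, ht, t', ht', rfl⟩ := Set.mem_mul.mp hz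
      exact hcon t ht t' ht'
    have h1m : (1 : K) ∈ Msub := hle hspan
    obtain ⟨m, hm, hm1⟩ := h1m
    have : m = 1 := hinj (by simpa using hm1)
    exact h𝔪.ne_top (Ideal.eq_top_iff_one 𝔪 |>.mpr (this ▸ hm))
  obtain ⟨t, htT, t', ht'T, hnot⟩ := hex
  have htI : t ∈ I' := hT htT
  have ht'I : t' ∈ I'⁻¹ := hT' ht'T
  have htt' : t * t' ∈ (1 : FractionalIdeal A⁰ K) := by
    rw [← hmul]; exact FractionalIdeal.mul_mem_mul htI ht'I
  obtain ⟨u, hu⟩ := (FractionalIdeal.mem_one_iff A⁰).mp htt'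
  have hum : u ∉ 𝔪 := by
    intro h
    exact hnot ⟨u, h, hu⟩
  obtain ⟨a, haI, hat⟩ := (FractionalIdeal.mem_coeIdeal A⁰).mp htI
  refine ⟨a, haI, u, hum, fun x hx => ?_⟩
  have hx' : t' * algebraMap A K x ∈ (1 : FractionalIdeal A⁰ K) := by
    rw [← hmul, mul_comm I' I'⁻¹]
    exact FractionalIdeal.mul_mem_mul ht'I ((FractionalIdeal.mem_coeIdeal A⁰).mpr ⟨x, hx, rfl⟩)
  obtain ⟨c, hc⟩ := (FractionalIdeal.mem_one_iff A⁰).mp hx'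
  have key : algebraMap A K (u * x) = algebraMap A K (a * c) := by
    rw [map_mul, map_mul, hu, hat, hc]; ring
  exact Ideal.mem_span_singleton.mpr ⟨c, hinj key⟩

/-- In a Dedekind domain, no ideal surjects onto `(A⧸𝔪)²`. -/
lemma dedekind_no_surj {A : Type u} [CommRing A] [IsDomain A] [IsDedekindDomain A]
    (𝔪 : Ideal A) (h𝔪 : 𝔪.IsMaximal) (I : Ideal A)
    (f : I →ₗ[A] (A ⧸ 𝔪) × (A ⧸ 𝔪)) : ¬ Surjective f := by
  intro hf
  haveI := Ideal.Quotient.nontrivial_iff.mpr h𝔪.ne_top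
  letI := Ideal.Quotient.field 𝔪
  by_cases hbot : I = ⊥
  · obtain ⟨x, hx⟩ := hf (1, 0)
    have hx0 : x = 0 := by
      have h2 : x.1 ∈ (⊥ : Ideal A) := hbot ▸ x.2
      exact Subtype.ext (by simpa using h2)
    rw [hx0, map_zero] at hx
    exact one_ne_zero (congrArg Prod.fst hx).symm
  · obtain ⟨a, haI, u, hum, hloc⟩ := dedekind_locCyc I hbot 𝔪 h𝔪
    set a' : I := ⟨a, haI⟩
    have humk : Ideal.Quotient.mk 𝔪 u ≠ 0 := fun h => hum (Ideal.Quotient.eq_zero_iff_mem.mp h)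
    have key : ∀ y : (A ⧸ 𝔪) × (A ⧸ 𝔪), y ∈ Submodule.span A {f a'} := by
      intro y
      obtain ⟨x, rfl⟩ := hf y
      obtain ⟨c, hc⟩ := Ideal.mem_span_singleton.mp (hloc x.1 x.2)
      have hux : u • x = c • a' := Subtype.ext (by
        simpa [a', smul_eq_mul, mul_comm] using hc)
      have huf : u • f x = c • f a' := by rw [← map_smul, ← map_smul, hux]
      obtain ⟨d, hd⟩ := Ideal.Quotient.mk_surjective
        ((Ideal.Quotient.mk 𝔪 u)⁻¹ * Ideal.Quotient.mk 𝔪 c)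
      refine Submodule.mem_span_singleton.mpr ⟨d, ?_⟩
      have h1 : Ideal.Quotient.mk 𝔪 u * (f x).1 = Ideal.Quotient.mk 𝔪 c * (f a').1 := by
        rw [← quot_smul_eq, ← quot_smul_eq]; exact congrArg Prod.fst huf
      have h2 : Ideal.Quotient.mk 𝔪 u * (f x).2 = Ideal.Quotient.mk 𝔪 c * (f a').2 := by
        rw [← quot_smul_eq, ← quot_smul_eq]; exact congrArg Prod.snd huf
      have e1 : (f x).1 = Ideal.Quotient.mk 𝔪 d * (f a').1 := by
        rw [hd, mul_assoc, ← h1, ← mul_assoc, inv_mul_cancel₀ humk, one_mul]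
      have e2 : (f x).2 = Ideal.Quotient.mk 𝔪 d * (f a').2 := by
        rw [hd, mul_assoc, ← h2, ← mul_assoc, inv_mul_cancel₀ humk, one_mul]
      have hds : d • f a' = (Ideal.Quotient.mk 𝔪 d * (f a').1,
          Ideal.Quotient.mk 𝔪 d * (f a').2) :=
        Prod.ext (quot_smul_eq 𝔪 d (f a').1) (quot_smul_eq 𝔪 d (f a').2)
      rw [hds]
      exact Prod.ext e1.symm e2.symm
    exact prod_quot_not_cyclic 𝔪 h𝔪 (f a') (Submodule.eq_top_iff'.mpr key)

/-- In a noetherian ring, for every ideal `I` and maximal ideal `𝔪`, either `I` surjects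
onto `(A⧸𝔪)²`, or `I` is "locally principal at `𝔪`". -/
lemma surj_or_locCyc {A : Type u} [CommRing A] [IsNoetherianRing A]
    (I : Ideal A) (𝔪 : Ideal A) (h𝔪 : 𝔪.IsMaximal) :
    (∃ f : I →ₗ[A] (A ⧸ 𝔪) × (A ⧸ 𝔪), Surjective f) ∨
    (∃ a ∈ I, ∃ u ∉ 𝔪, ∀ x ∈ I, u * x ∈ Ideal.span {a}) := by
  letI := Ideal.Quotient.field 𝔪
  letI : Module (A ⧸ 𝔪) ((↥I) ⧸ (𝔪 • ⊤ : Submodule A ↥I)) := inferInstance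
  letI : IsScalarTower A (A ⧸ 𝔪) ((↥I) ⧸ (𝔪 • ⊤ : Submodule A ↥I)) := inferInstance
  by_cases hcyc : ∃ v : (↥I) ⧸ (𝔪 • ⊤ : Submodule A ↥I),
      Submodule.span (A ⧸ 𝔪) {v} = ⊤
  · right
    obtain ⟨v, hv⟩ := hcyc
    obtain ⟨a', ha'⟩ := Submodule.Quotient.mk_surjective (𝔪 • ⊤ : Submodule A ↥I) v
    refine ⟨a'.1, a'.2, ?_⟩
    set N : Submodule A (A ⧸ (Ideal.span {a'.1} : Ideal A)) :=
      Submodule.map (Ideal.span {a'.1} : Ideal A).mkQ I with hN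
    have hNfg : N.FG := (IsNoetherian.noetherian I).map _
    have hle : N ≤ 𝔪 • N := by
      rintro n ⟨x, hx, rfl⟩
      have hxV : Submodule.Quotient.mk (p := (𝔪 • ⊤ : Submodule A ↥I)) ⟨x, hx⟩ ∈
          Submodule.span (A ⧸ 𝔪) {v} := hv ▸ trivial
      obtain ⟨c, hc⟩ := Submodule.mem_span_singleton.mp hxV
      obtain ⟨c₀, rfl⟩ := Ideal.Quotient.mk_surjective c
      rw [← ha', Module.Quotient.mk_smul_mk] at hc
      have hdiff : (⟨x, hx⟩ : ↥I) - c₀ • a' ∈ (𝔪 • ⊤ : Submodule A ↥I) := by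
        rw [← Submodule.Quotient.mk_eq_zero, Submodule.Quotient.mk_sub, hc, sub_self]
      have hdiffA : x - c₀ * a'.1 ∈ 𝔪 • (I : Submodule A A) := by
        have h2 := Submodule.mem_map_of_mem (f := I.subtype) hdiff
        rwa [Submodule.map_smul'', Submodule.map_top, Submodule.range_subtype] at h2
      have hx_eq : (Ideal.span {a'.1} : Ideal A).mkQ x
          = (Ideal.span {a'.1} : Ideal A).mkQ (x - c₀ * a'.1) := by
        rw [Submodule.mkQ_apply, Submodule.mkQ_apply, Submodule.Quotient.eq]
        have h3 : x - (x - c₀ * a'.1) = c₀ * a'.1 := by ring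
        rw [h3]
        exact Ideal.mem_span_singleton.mpr ⟨c₀, mul_comm c₀ a'.1⟩
      rw [hx_eq]
      have h4 : (Ideal.span {a'.1} : Ideal A).mkQ (x - c₀ * a'.1) ∈
          Submodule.map (Ideal.span {a'.1} : Ideal A).mkQ (𝔪 • (I : Submodule A A)) :=
        Submodule.mem_map_of_mem hdiffA
      rwa [Submodule.map_smul''] at h4
    obtain ⟨r, hr1, hr2⟩ :=
      Submodule.exists_sub_one_mem_and_smul_eq_zero_of_fg_of_le_smul 𝔪 N hNfg hle
    refine ⟨r, fun hrm => h𝔪.ne_top (Ideal.eq_top_iff_one 𝔪 |>.mpr ?_), fun x hx => ?_⟩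
    · have h3 : r - (r - 1) ∈ 𝔪 := Submodule.sub_mem _ hrm hr1
      simpa using h3
    · have hmem : (Ideal.span {a'.1} : Ideal A).mkQ x ∈ N := Submodule.mem_map_of_mem hx
      have h4 := hr2 _ hmem
      rw [← map_smul] at h4
      have h5 : r • x ∈ Ideal.span {a'.1} := by
        rwa [Submodule.mkQ_apply, Submodule.Quotient.mk_eq_zero] at h4
      simpa [smul_eq_mul] using h5
  · left
    letI : Module.Finite A ↥I := Module.Finite.iff_fg.mpr (IsNoetherian.noetherian I)
    letI : Module.Finite A ((↥I) ⧸ (𝔪 • ⊤ : Submodule A ↥I)) := Module.Finite.quotient A _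
    letI : Module.Finite (A ⧸ 𝔪) ((↥I) ⧸ (𝔪 • ⊤ : Submodule A ↥I)) :=
      Module.Finite.of_restrictScalars_finite A _ _
    have hrank : 2 ≤ Module.finrank (A ⧸ 𝔪) ((↥I) ⧸ (𝔪 • ⊤ : Submodule A ↥I)) := by
      by_contra hlt
      push_neg at hlt
      have h1 : Module.finrank (A ⧸ 𝔪) ((↥I) ⧸ (𝔪 • ⊤ : Submodule A ↥I)) ≤ 1 := by omega
      obtain ⟨v, hv⟩ := Module.finrank_le_one_iff_top_isPrincipal.mp h1
      exact hcyc ⟨v, hv.symm⟩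
    set b := Module.finBasis (A ⧸ 𝔪) ((↥I) ⧸ (𝔪 • ⊤ : Submodule A ↥I)) with hb
    set i0 : Fin (Module.finrank (A ⧸ 𝔪) ((↥I) ⧸ (𝔪 • ⊤ : Submodule A ↥I))) := ⟨0, by omega⟩
    set i1 : Fin (Module.finrank (A ⧸ 𝔪) ((↥I) ⧸ (𝔪 • ⊤ : Submodule A ↥I))) := ⟨1, by omega⟩
    have hne : i0 ≠ i1 := by
      intro h
      exact absurd (congrArg Fin.val h) (by simp [i0, i1])
    set φ := LinearMap.prod (b.coord i0) (b.coord i1) with hφ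
    have hφsurj : Surjective φ := by
      rintro ⟨c, d⟩
      refine ⟨c • b i0 + d • b i1, ?_⟩
      simp only [hφ, LinearMap.prod_apply, Function.prod, map_add, map_smul, Module.Basis.coord_apply,
        Module.Basis.repr_self]
      rw [Prod.mk.injEq]
      constructor
      · simp [Finsupp.single_apply, hne, hne.symm]
      · simp [Finsupp.single_apply, hne, hne.symm]
    refine ⟨(φ.restrictScalars A).comp (𝔪 • ⊤ : Submodule A ↥I).mkQ, ?_⟩
    exact hφsurj.comp (Submodule.mkQ_surjective _)

end LocCyc

section Frac

/-- A subquotient of the fraction field isomorphic to `(A⧸𝔪)²` yields a surjection from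
an (integral) ideal. -/
lemma exists_ideal_surj_of_subquotient_frac {A : Type u} [CommRing A] [IsDomain A]
    (𝔪 : Ideal A) (h𝔪 : 𝔪.IsMaximal)
    (h : IsSubquotientOf A ((A ⧸ 𝔪) × (A ⧸ 𝔪)) (FractionRing A)) :
    ∃ (I : Ideal A) (f : I →ₗ[A] (A ⧸ 𝔪) × (A ⧸ 𝔪)), Surjective f := by
  classical
  set K := FractionRing A
  obtain ⟨Q, f, hf⟩ := h.exists_surjective
  obtain ⟨x, hx⟩ := hf (1, 0)
  obtain ⟨y, hy⟩ := hf (0, 1)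
  set Q' : Submodule A K := Submodule.span A {x.1, y.1} with hQ'
  have hQ'le : Q' ≤ Q := by
    rw [hQ', Submodule.span_le]
    rintro z hz
    rcases hz with rfl | rfl
    · exact x.2
    · exact y.2
  set g : Q' →ₗ[A] (A ⧸ 𝔪) × (A ⧸ 𝔪) := f.comp (Submodule.inclusion hQ'le) with hg
  have hgx : g ⟨x.1, Submodule.subset_span (Or.inl rfl)⟩ = (1, 0) := by
    rw [hg, LinearMap.comp_apply]
    have : Submodule.inclusion hQ'le ⟨x.1, Submodule.subset_span (Or.inl rfl)⟩ = x :=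
      Subtype.ext rfl
    rw [this, hx]
  have hgy : g ⟨y.1, Submodule.subset_span (Or.inr rfl)⟩ = (0, 1) := by
    rw [hg, LinearMap.comp_apply]
    have : Submodule.inclusion hQ'le ⟨y.1, Submodule.subset_span (Or.inr rfl)⟩ = y :=
      Subtype.ext rfl
    rw [this, hy]
  have hgsurj : Surjective g := by
    rintro ⟨c, d⟩
    obtain ⟨c₀, rfl⟩ := Ideal.Quotient.mk_surjective c
    obtain ⟨d₀, rfl⟩ := Ideal.Quotient.mk_surjective d
    refine ⟨c₀ • ⟨x.1, Submodule.subset_span (Or.inl rfl)⟩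
      + d₀ • ⟨y.1, Submodule.subset_span (Or.inr rfl)⟩, ?_⟩
    rw [map_add, map_smul, map_smul, hgx, hgy]
    rw [Prod.ext_iff]
    constructor
    · show c₀ • (1 : A ⧸ 𝔪) + d₀ • (0 : A ⧸ 𝔪) = _
      rw [quot_smul_eq, quot_smul_eq, mul_one, mul_zero, add_zero]
    · show c₀ • (0 : A ⧸ 𝔪) + d₀ • (1 : A ⧸ 𝔪) = _
      rw [quot_smul_eq, quot_smul_eq, mul_one, mul_zero, zero_add]
  obtain ⟨b, hb⟩ := IsLocalization.exist_integer_multiples_of_finset A⁰ ({x.1, y.1} : Finset K)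
  set μ : K →ₗ[A] K := LinearMap.lsmul A K b.1 with hμ
  have hμinj : Injective μ := by
    intro z w hzw
    have hb0 : (algebraMap A K) b.1 ≠ 0 := by
      have := IsFractionRing.injective A K
      simp only [ne_eq, map_eq_zero_iff _ this]
      exact nonZeroDivisors.coe_ne_zero b
    have : (algebraMap A K) b.1 * z = (algebraMap A K) b.1 * w := by
      simpa [hμ, Algebra.smul_def] using hzw
    exact mul_left_cancel₀ hb0 this
  set Φ : Q' →ₗ[A] K := μ.comp Q'.subtype with hΦ
  have hΦinj : Injective Φ := hμinj.comp Subtype.val_injective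
  have hrange : LinearMap.range Φ ≤ LinearMap.range (Algebra.linearMap A K) := by
    rintro z ⟨w, rfl⟩
    have hw : w.1 ∈ Q' := w.2
    have hsub : Q' ≤ (LinearMap.range (Algebra.linearMap A K)).comap μ := by
      rw [hQ', Submodule.span_le]
      rintro z' hz'
      have : IsLocalization.IsInteger A (b • z') := by
        rcases hz' with rfl | rfl
        · exact hb x.1 (by simp)
        · exact hb y.1 (by simp)
      obtain ⟨w', hw'⟩ := this
      exact ⟨w', hw'⟩
    exact hsub hw
  set I : Ideal A := (LinearMap.range Φ).comap (Algebra.linearMap A K) with hI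
  have hmap : Submodule.map (Algebra.linearMap A K) I = LinearMap.range Φ := by
    rw [hI, Submodule.map_comap_eq, LinearMap.range_eq_map (Algebra.linearMap A K),
      Submodule.map_top]
    exact inf_eq_right.mpr hrange
  have halginj : Injective (Algebra.linearMap A K) := IsFractionRing.injective A K
  refine ⟨I, ?_, ?_⟩
  · exact (g.comp ((LinearEquiv.ofInjective Φ hΦinj).symm.toLinearMap.comp
      ((LinearEquiv.ofEq _ _ hmap).toLinearMap.comp
        (Submodule.equivMapOfInjective (Algebra.linearMap A K) halginj I).toLinearMap)))
  · exact hgsurj.comp ((LinearEquiv.ofInjective Φ hΦinj).symm.surjective.comp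
      ((LinearEquiv.ofEq _ _ hmap).surjective.comp
        (Submodule.equivMapOfInjective (Algebra.linearMap A K) halginj I).surjective))

end Frac

section MeagerDedekind

open FractionalIdeal

/-- If `A` is a meager `A`-module, every nonzero integral ideal is invertible. -/
lemma integral_invertible {A : Type u} [CommRing A] [IsDomain A] [IsNoetherianRing A]
    (hm : IsMeagerModule A A) (I : Ideal A) (hI : I ≠ ⊥) :
    (I : FractionalIdeal A⁰ (FractionRing A)) * (I : FractionalIdeal A⁰ (FractionRing A))⁻¹
      = 1 := by
  set K := FractionRing A
  have hinj : Injective (algebraMap A K) := IsFractionRing.injective A K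
  by_contra hne
  have hPle : (I : FractionalIdeal A⁰ K) * (I : FractionalIdeal A⁰ K)⁻¹ ≤ 1 := by
    rw [inv_eq]; exact mul_one_div_le_one
  obtain ⟨J₀, hJ₀⟩ := le_one_iff_exists_coeIdeal.mp hPle
  have hJ₀top : J₀ ≠ ⊤ := by
    intro h
    rw [h, coeIdeal_top] at hJ₀
    exact hne hJ₀.symm
  obtain ⟨𝔪, h𝔪, hJ𝔪⟩ := Ideal.exists_le_maximal J₀ hJ₀top
  have hloc : ∃ a ∈ I, ∃ u ∉ 𝔪, ∀ x ∈ I, u * x ∈ Ideal.span {a} := by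
    rcases surj_or_locCyc I 𝔪 h𝔪 with ⟨f, hf⟩ | h
    · exact absurd (isSubquotientOf_of_ideal_surjection I f hf) (hm 𝔪 h𝔪)
    · exact h
  obtain ⟨a, haI, u, hum, hloc⟩ := hloc
  have hu0 : u ≠ 0 := fun h => hum (h ▸ 𝔪.zero_mem)
  have ha0 : a ≠ 0 := by
    intro h
    apply hI
    rw [eq_bot_iff]
    intro x hx
    have := hloc x hx
    rw [h, Ideal.span_singleton_eq_bot.mpr rfl, Submodule.mem_bot] at this
    have hx0 : x = 0 := by
      rcases mul_eq_zero.mp this with h' | h'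
      · exact absurd h' hu0
      · exact h'
    simpa using hx0
  have haK : algebraMap A K a ≠ 0 := fun h => ha0 (hinj (by simpa using h))
  set z : K := algebraMap A K u * (algebraMap A K a)⁻¹ with hz
  have hzmem : z ∈ (I : FractionalIdeal A⁰ K)⁻¹ := by
    rw [inv_eq, mem_div_iff_of_ne_zero (coeIdeal_ne_zero.mpr hI)]
    intro y hy
    obtain ⟨xA, hxA, rfl⟩ := (mem_coeIdeal A⁰).mp hy
    obtain ⟨c, hc⟩ := Ideal.mem_span_singleton.mp (hloc xA hxA)
    refine (mem_one_iff A⁰).mpr ⟨c, ?_⟩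
    have : algebraMap A K (u * xA) = algebraMap A K (a * c) := by rw [hc]
    rw [_root_.map_mul, _root_.map_mul] at this
    rw [hz, mul_comm (algebraMap A K u) ((algebraMap A K a)⁻¹), mul_assoc, this,
      ← mul_assoc, inv_mul_cancel₀ haK, one_mul]
  have hmem : algebraMap A K a * z
      ∈ (I : FractionalIdeal A⁰ K) * (I : FractionalIdeal A⁰ K)⁻¹ :=
    FractionalIdeal.mul_mem_mul ((mem_coeIdeal A⁰).mpr ⟨a, haI, rfl⟩) hzmem
  have haz : algebraMap A K a * z = algebraMap A K u := by
    rw [hz]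
    rw [mul_comm, mul_assoc, inv_mul_cancel₀ haK, mul_one]
  rw [haz, ← hJ₀] at hmem
  obtain ⟨u', hu', hu'eq⟩ := (mem_coeIdeal A⁰).mp hmem
  exact hum (hJ𝔪 (hinj hu'eq ▸ hu'))

/-- A noetherian domain which is meager over itself is a Dedekind domain. -/
lemma dedekind_of_meager_self {A : Type u} [CommRing A] [IsDomain A] [IsNoetherianRing A]
    (hm : IsMeagerModule A A) : IsDedekindDomain A := by
  rw [isDedekindDomain_iff_mul_inv_cancel (K := FractionRing A)]
  intro J hJ0
  obtain ⟨a, I, ha, rfl⟩ := exists_eq_spanSingleton_mul J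
  have hI0 : I ≠ ⊥ := coeIdeal_ne_zero.mp (right_ne_zero_of_mul hJ0)
  rw [mul_inv_cancel_iff]
  refine ⟨spanSingleton A⁰ (algebraMap A (FractionRing A) a)
    * (I : FractionalIdeal A⁰ (FractionRing A))⁻¹, ?_⟩
  rw [mul_assoc, mul_left_comm (I : FractionalIdeal A⁰ (FractionRing A)),
    integral_invertible hm I hI0, mul_one, spanSingleton_mul_spanSingleton,
    inv_mul_cancel₀, spanSingleton_one]
  exact mt ((injective_iff_map_eq_zero (algebraMap A (FractionRing A))).mp
    (IsFractionRing.injective A (FractionRing A)) _) ha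

end MeagerDedekind

/-- For a noetherian integral domain `A`, the following are equivalent: `A` is a meager
`A`-module; `Frac(A)` is a meager `A`-module; `A` is a Dedekind domain. -/
theorem meager_iff_dedekind
    (A : Type u) [CommRing A] [IsDomain A] [IsNoetherianRing A] :
    List.TFAE
      [ IsMeagerModule A A,
        IsMeagerModule A (FractionRing A),
        IsDedekindDomain A ] := by
  tfae_have 1 → 3
  | hm => dedekind_of_meager_self hm
  tfae_have 3 → 2
  | hd => by
    intro 𝔪 h𝔪 hsub
    obtain ⟨I, f, hf⟩ := exists_ideal_surj_of_subquotient_frac 𝔪 h𝔪 hsub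
    exact dedekind_no_surj 𝔪 h𝔪 I f hf
  tfae_have 2 → 1
  | hm => by
    intro 𝔪 h𝔪 hsub
    exact hm 𝔪 h𝔪 (hsub.of_injective (Algebra.linearMap A (FractionRing A))
      (IsFractionRing.injective A (FractionRing A)))
  tfae_finish
end
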